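/- Let d ≥ 2 and let u₀ : [0, π] → [0, ∞) be Lipschitz with polar extension to S^d. Suppose 0 ≤ a ≤ τ ≤ b ≤ π/2, and let u*, M̃u₀ : [0, π] → [0,∞) be Lipschitz with u₀ ≤ u* ≤ M̃u₀ pointwise, u*(a) = u₀(a), u*(b) = u₀(b), u* non-increasing on [a, τ] and non-decreasing on [τ, b]. Then ∫_a^b |(u*)'(θ)| (sin θ)^{d−1} dθ ≤ ∫_a^b |u₀'(θ)| (sin θ)^{d−1} dθ + ∫_a^τ (M̃u₀(θ) − u₀(θ)) · (d−1)(sin θ)^{d−2} cos θ dθ. -/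

import Mathlib

open Real intervalIntegral

namespace SIBP

open MeasureTheory Set Filter Topology


lemma abs_deriv_le {K : NNReal} {f : ℝ → ℝ} (hf : LipschitzWith K f) (x : ℝ) :
    |deriv f x| ≤ K := by
  by_cases h : DifferentiableAt ℝ f x
  · have ht : Tendsto (slope f x) (𝓝[≠] x) (𝓝 (deriv f x)) :=
      hasDerivAt_iff_tendsto_slope.1 h.hasDerivAt
    refine le_of_tendsto ht.abs ?_
    filter_upwards [self_mem_nhdsWithin] with y hy
    have hyx : (0:ℝ) < |y - x| := abs_pos.2 (sub_ne_zero.2 hy)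
    have h1 : |f y - f x| ≤ K * |y - x| := by
      simpa [Real.dist_eq] using hf.dist_le_mul y x
    rw [slope_def_field, abs_div]
    rw [div_le_iff₀ hyx]
    exact h1
  · simp [deriv_zero_of_not_differentiableAt h]

lemma deriv_nonpos_of_antitoneOn {g : ℝ → ℝ} {s t x : ℝ} (hg : AntitoneOn g (Icc s t))
    (hs : s < x) (ht : x ≤ t) (hd : DifferentiableAt ℝ g x) : deriv g x ≤ 0 := by
  have h1 : Tendsto (slope g x) (𝓝[<] x) (𝓝 (deriv g x)) :=
    (hasDerivAt_iff_tendsto_slope.1 hd.hasDerivAt).mono_left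
      (nhdsWithin_mono x fun y hy => ne_of_lt hy)
  refine le_of_tendsto h1 ?_
  filter_upwards [Ioo_mem_nhdsLT_of_mem ⟨hs, le_refl x⟩] with y hy
  rw [slope_def_field]
  apply div_nonpos_of_nonneg_of_nonpos
  · have : g x ≤ g y := hg ⟨hy.1.le, hy.2.le.trans ht⟩ ⟨hs.le, ht⟩ hy.2.le
    linarith
  · linarith [hy.2]

lemma deriv_nonneg_of_monotoneOn {g : ℝ → ℝ} {s t x : ℝ} (hg : MonotoneOn g (Icc s t))
    (hs : s < x) (ht : x ≤ t) (hd : DifferentiableAt ℝ g x) : 0 ≤ deriv g x := by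
  have h1 : Tendsto (slope g x) (𝓝[<] x) (𝓝 (deriv g x)) :=
    (hasDerivAt_iff_tendsto_slope.1 hd.hasDerivAt).mono_left
      (nhdsWithin_mono x fun y hy => ne_of_lt hy)
  refine ge_of_tendsto h1 ?_
  filter_upwards [Ioo_mem_nhdsLT_of_mem ⟨hs, le_refl x⟩] with y hy
  rw [slope_def_field]
  have h2 : g y ≤ g x := hg ⟨hy.1.le, hy.2.le.trans ht⟩ ⟨hs.le, ht⟩ hy.2.le
  rw [div_nonneg_iff]
  right
  constructor <;> linarith [hy.2]

lemma lip_ftc {K : NNReal} {f : ℝ → ℝ} (hf : LipschitzWith K f) (a b : ℝ) :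
    ∫ x in a..b, deriv f x = f b - f a := by
  have hc : Continuous f := hf.continuous
  set u : ℕ → ℝ := fun n => ((n : ℝ) + 1)⁻¹ with hu_def
  have hupos : ∀ n, 0 < u n := fun n => by positivity
  have hu0 : Tendsto u atTop (𝓝 0) := by
    simpa [hu_def, one_div] using tendsto_one_div_add_atTop_nhds_zero_nat (𝕜 := ℝ)
  set F : ℕ → ℝ → ℝ := fun n x => (f (x + u n) - f x) / u n with hF_def
  have hnhds : ∀ c : ℝ, Tendsto (fun n => c + u n) atTop (𝓝[≠] c) := by
    intro c
    apply tendsto_nhdsWithin_of_tendsto_nhds_of_eventually_within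
    · simpa using tendsto_const_nhds.add hu0
    · filter_upwards with n
      have := hupos n
      simp only [mem_compl_iff, mem_singleton_iff]
      intro h
      nlinarith [hupos n]
  have hslope : ∀ x : ℝ, DifferentiableAt ℝ f x →
      Tendsto (fun n => F n x) atTop (𝓝 (deriv f x)) := by
    intro x hx
    have h1 : Tendsto (slope f x) (𝓝[≠] x) (𝓝 (deriv f x)) :=
      hasDerivAt_iff_tendsto_slope.1 hx.hasDerivAt
    refine (h1.comp (hnhds x)).congr fun n => ?_
    simp only [Function.comp, slope_def_field, hF_def, add_sub_cancel_left]
  have hbd : ∀ c : ℝ, Tendsto (fun n => (∫ x in c..(c + u n), f x) / u n) atTop (𝓝 (f c)) := by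
    intro c
    have hd : HasDerivAt (fun y => ∫ x in c..y, f x) (f c) c :=
      integral_hasDerivAt_right (hc.intervalIntegrable c c)
        (hc.stronglyMeasurable.stronglyMeasurableAtFilter) hc.continuousAt
    have h1 : Tendsto (slope (fun y => ∫ x in c..y, f x) c) (𝓝[≠] c) (𝓝 (f c)) :=
      hasDerivAt_iff_tendsto_slope.1 hd
    refine (h1.comp (hnhds c)).congr fun n => ?_
    simp only [Function.comp, slope_def_field, add_sub_cancel_left,
      intervalIntegral.integral_same, sub_zero]
  have hmain : Tendsto (fun n => ∫ x in a..b, F n x) atTop (𝓝 (∫ x in a..b, deriv f x)) := by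
    apply intervalIntegral.tendsto_integral_filter_of_dominated_convergence
      (bound := fun _ => (K : ℝ))
    · filter_upwards with n
      exact (((hc.comp (continuous_id.add continuous_const)).sub hc).div_const _).aestronglyMeasurable
    · filter_upwards with n
      refine ae_of_all _ fun x _ => ?_
      have h1 : |f (x + u n) - f x| ≤ K * u n := by
        have h2 := hf.dist_le_mul (x + u n) x
        rw [Real.dist_eq, Real.dist_eq] at h2
        simpa [abs_of_pos (hupos n)] using h2
      rw [Real.norm_eq_abs, hF_def]
      rw [abs_div, abs_of_pos (hupos n), div_le_iff₀ (hupos n)]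
      exact h1
    · exact intervalIntegrable_const
    · filter_upwards [hf.ae_differentiableAt_real] with x hx _
      exact hslope x hx
  have hInt : ∀ n, (∫ x in a..b, F n x)
      = (∫ x in b..(b + u n), f x) / u n - (∫ x in a..(a + u n), f x) / u n := by
    intro n
    have hca : Continuous (fun x : ℝ => f (x + u n)) := hc.comp (continuous_id.add continuous_const)
    have h1 : (∫ x in a..b, F n x) = (∫ x in a..b, (f (x + u n) - f x)) / u n := by
      rw [← intervalIntegral.integral_div]
    have h2 : (∫ x in a..b, (f (x + u n) - f x))
        = (∫ x in (a + u n)..(b + u n), f x) - ∫ x in a..b, f x := by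
      rw [intervalIntegral.integral_sub (hca.intervalIntegrable a b) (hc.intervalIntegrable a b),
        intervalIntegral.integral_comp_add_right]
    have i1 : (∫ x in a..(a + u n), f x) + ∫ x in (a + u n)..(b + u n), f x
        = ∫ x in a..(b + u n), f x :=
      integral_add_adjacent_intervals (hc.intervalIntegrable _ _) (hc.intervalIntegrable _ _)
    have i2 : (∫ x in a..b, f x) + ∫ x in b..(b + u n), f x = ∫ x in a..(b + u n), f x :=
      integral_add_adjacent_intervals (hc.intervalIntegrable _ _) (hc.intervalIntegrable _ _)
    have h3 : (∫ x in (a + u n)..(b + u n), f x) - ∫ x in a..b, f x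
        = (∫ x in b..(b + u n), f x) - ∫ x in a..(a + u n), f x := by linarith
    rw [h1, h2, h3, sub_div]
  have hlim2 : Tendsto (fun n => ∫ x in a..b, F n x) atTop (𝓝 (f b - f a)) := by
    simp only [hInt]
    exact (hbd b).sub (hbd a)
  exact tendsto_nhds_unique hmain hlim2



lemma exists_ext {K : NNReal} {f : ℝ → ℝ} (hf : LipschitzOnWith K f (Icc 0 π)) :
    ∃ (g : ℝ → ℝ) (C : ℝ), LipschitzWith K g ∧ EqOn f g (Icc 0 π) ∧ (∀ x, |g x| ≤ C) := by
  obtain ⟨g, hg, hfg⟩ := hf.extend_real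
  obtain ⟨C, hC⟩ : ∃ C, ∀ x ∈ Icc (0:ℝ) π, ‖f x‖ ≤ C :=
    isCompact_Icc.exists_bound_of_continuousOn hf.continuousOn
  have hC0 : 0 ≤ C := le_trans (norm_nonneg _) (hC 0 ⟨le_refl 0, pi_pos.le⟩)
  refine ⟨fun x => max (min (g x) C) (-C), C, (hg.min_const C).max_const (-C), ?_, ?_⟩
  · intro x hx
    have h1 : |f x| ≤ C := by simpa [Real.norm_eq_abs] using hC x hx
    have h2 := abs_le.1 h1
    show f x = max (min (g x) C) (-C)
    rw [← hfg hx, min_eq_left h2.2, max_eq_left (by linarith [h2.1] : -C ≤ f x)]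
  · intro x
    rw [abs_le]
    refine ⟨le_max_right _ _, max_le (le_trans (min_le_right _ _) le_rfl) (by linarith)⟩

lemma intInt {f : ℝ → ℝ} {a b : ℝ} (hm : AEStronglyMeasurable f (volume.restrict (Set.uIoc a b)))
    {C : ℝ} (hb : ∀ x, |f x| ≤ C) : IntervalIntegrable f volume a b :=
  (intervalIntegrable_const (c := C)).mono_fun hm
    (ae_of_all _ fun x => by
      simpa [Real.norm_eq_abs] using (hb x).trans (le_abs_self C))

lemma parts (m : ℕ) {K : NNReal} {C : ℝ} {g : ℝ → ℝ}
    (hg : LipschitzWith K g) (hgb : ∀ x, |g x| ≤ C) (a b : ℝ) :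
    ∫ x in a..b, deriv g x * Real.sin x ^ m
      = g b * Real.sin b ^ m - g a * Real.sin a ^ m
        - ∫ x in a..b, g x * ((m : ℝ) * Real.sin x ^ (m - 1) * Real.cos x) := by
  set W : ℝ → ℝ := fun x => (m : ℝ) * Real.sin x ^ (m - 1) * Real.cos x with hW_def
  have hW : ∀ x, HasDerivAt (fun y => Real.sin y ^ m) (W x) x := fun x => by
    exact (Real.hasDerivAt_sin x).pow m
  have hWc : Continuous W := by
    apply Continuous.mul
    apply Continuous.mul continuous_const (Real.continuous_sin.pow _)
    exact Real.continuous_cos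
  have hwb : ∀ x : ℝ, |Real.sin x ^ m| ≤ 1 := fun x => by
    rw [abs_pow]
    exact pow_le_one₀ (abs_nonneg _) (Real.abs_sin_le_one x)
  have hwlip : LipschitzWith (m : NNReal) (fun y => Real.sin y ^ m) := by
    apply lipschitzWith_of_nnnorm_deriv_le (fun x => (hW x).differentiableAt)
    intro x
    rw [← NNReal.coe_le_coe, coe_nnnorm, (hW x).deriv, Real.norm_eq_abs]
    push_cast
    calc |W x| ≤ (m : ℝ) * 1 * 1 := by
          rw [hW_def, abs_mul, abs_mul, Nat.abs_cast]
          gcongr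
          · rw [abs_pow]; exact pow_le_one₀ (abs_nonneg _) (Real.abs_sin_le_one x)
          · exact Real.abs_cos_le_one x
      _ = (m : ℝ) := by ring
  have hC0 : 0 ≤ C := (abs_nonneg _).trans (hgb 0)
  -- product is Lipschitz
  have hP : LipschitzWith (Real.toNNReal (C * m + K)) (fun x => g x * Real.sin x ^ m) := by
    apply LipschitzWith.of_dist_le'
    intro x y
    rw [Real.dist_eq, Real.dist_eq]
    have e1 : g x * Real.sin x ^ m - g y * Real.sin y ^ m
        = g x * (Real.sin x ^ m - Real.sin y ^ m) + Real.sin y ^ m * (g x - g y) := by ring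
    rw [e1]
    have b1 : |Real.sin x ^ m - Real.sin y ^ m| ≤ (m : ℝ) * |x - y| := by
      have := hwlip.dist_le_mul x y
      rw [Real.dist_eq, Real.dist_eq] at this
      simpa using this
    have b2 : |g x - g y| ≤ (K : ℝ) * |x - y| := by
      have := hg.dist_le_mul x y
      rw [Real.dist_eq, Real.dist_eq] at this
      exact this
    calc |g x * (Real.sin x ^ m - Real.sin y ^ m) + Real.sin y ^ m * (g x - g y)|
        ≤ |g x| * |Real.sin x ^ m - Real.sin y ^ m| + |Real.sin y ^ m| * |g x - g y| := by
          rw [← abs_mul, ← abs_mul]; exact abs_add_le _ _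
      _ ≤ C * ((m : ℝ) * |x - y|) + 1 * ((K : ℝ) * |x - y|) :=
          add_le_add (mul_le_mul (hgb x) b1 (abs_nonneg _) hC0)
            (mul_le_mul (hwb y) b2 (abs_nonneg _) zero_le_one)
      _ = (C * m + K) * |x - y| := by ring
  have h1 : ∫ x in a..b, deriv (fun y => g y * Real.sin y ^ m) x
      = g b * Real.sin b ^ m - g a * Real.sin a ^ m := lip_ftc hP a b
  have h2 : ∫ x in a..b, deriv (fun y => g y * Real.sin y ^ m) x
      = ∫ x in a..b, (deriv g x * Real.sin x ^ m + g x * W x) := by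
    apply intervalIntegral.integral_congr_ae
    filter_upwards [hg.ae_differentiableAt_real] with x hx _
    exact (hx.hasDerivAt.mul (hW x)).deriv
  have hi1 : IntervalIntegrable (fun x => deriv g x * Real.sin x ^ m) volume a b := by
    apply intInt (C := (K : ℝ))
    · exact ((measurable_deriv g).mul (Real.continuous_sin.pow m).measurable).aestronglyMeasurable
    · intro x
      rw [abs_mul]
      calc |deriv g x| * |Real.sin x ^ m| ≤ (K : ℝ) * 1 :=
            mul_le_mul (abs_deriv_le hg x) (hwb x) (abs_nonneg _) K.coe_nonneg
        _ = (K : ℝ) := by ring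
  have hi2 : IntervalIntegrable (fun x => g x * W x) volume a b :=
    (hg.continuous.mul hWc).intervalIntegrable a b
  rw [h2, intervalIntegral.integral_add hi1 hi2] at h1
  linarith


end SIBP


open SIBP MeasureTheory Set Filter Topology in
theorem spherical_integration_by_parts_estimate (d : ℕ) (hd : 2 ≤ d)
    (a τ b : ℝ) (ha : 0 ≤ a) (haτ : a ≤ τ) (hτb : τ ≤ b) (hb : b ≤ π / 2)
    (ustar u₀ Mu₀ : ℝ → ℝ)
    (hu₀Lip : ∃ K : NNReal, LipschitzOnWith K u₀ (Set.Icc 0 π))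
    (hustarLip : ∃ K : NNReal, LipschitzOnWith K ustar (Set.Icc 0 π))
    (hMLip : ∃ K : NNReal, LipschitzOnWith K Mu₀ (Set.Icc 0 π))
    (hnonneg : ∀ θ ∈ Set.Icc (0:ℝ) π, 0 ≤ u₀ θ)
    (hle₁ : ∀ θ ∈ Set.Icc (0:ℝ) π, u₀ θ ≤ ustar θ)
    (hle₂ : ∀ θ ∈ Set.Icc (0:ℝ) π, ustar θ ≤ Mu₀ θ)
    (hba : ustar a = u₀ a) (hbb : ustar b = u₀ b)
    (hmono₁ : AntitoneOn ustar (Set.Icc a τ))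
    (hmono₂ : MonotoneOn ustar (Set.Icc τ b)) :
    (∫ θ in a..b, |deriv ustar θ| * Real.sin θ ^ (d - 1)) ≤
      (∫ θ in a..b, |deriv u₀ θ| * Real.sin θ ^ (d - 1)) +
        ∫ θ in a..τ, (Mu₀ θ - u₀ θ) * ((d - 1 : ℝ) * Real.sin θ ^ (d - 2) * Real.cos θ) := by
  obtain ⟨K₀, hK₀⟩ := hu₀Lip
  obtain ⟨K₁, hK₁⟩ := hustarLip
  obtain ⟨KM, hKM⟩ := hMLip
  have hπ : π / 2 < π := by linarith [pi_pos]
  have hab : a ≤ b := haτ.trans hτb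
  obtain ⟨v, Cv, hv, hvEq, hvB⟩ := exists_ext hK₀
  obtain ⟨g, Cg, hg, hgEq, hgB⟩ := exists_ext hK₁
  set m := d - 1 with hm_def
  have hm2 : d - 2 = m - 1 := by omega
  have hcast : ((d : ℝ) - 1) = (m : ℝ) := by
    have h1 : (m : ℝ) = (d : ℝ) - 1 := by
      rw [hm_def, Nat.cast_sub (by omega : 1 ≤ d), Nat.cast_one]
    linarith
  simp only [hm2, hcast]
  have hsub : ∀ {x : ℝ}, a ≤ x → x ≤ b → x ∈ Icc (0:ℝ) π := fun {x} h1 h2 =>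
    ⟨ha.trans h1, le_of_lt (lt_of_le_of_lt (h2.trans hb) hπ)⟩
  -- continuity of the weight derivative
  have hWc : Continuous (fun x : ℝ => (m : ℝ) * Real.sin x ^ (m - 1) * Real.cos x) :=
    (continuous_const.mul (Real.continuous_sin.pow _)).mul Real.continuous_cos
  -- nonnegativity of weights on [a,b]
  have hsin : ∀ x : ℝ, a ≤ x → x ≤ b → 0 ≤ Real.sin x ^ m := fun x h1 h2 =>
    pow_nonneg (Real.sin_nonneg_of_nonneg_of_le_pi (ha.trans h1)
      (by linarith [pi_pos] : x ≤ π)) m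
  have hWnn : ∀ x : ℝ, a ≤ x → x ≤ b →
      0 ≤ (m : ℝ) * Real.sin x ^ (m - 1) * Real.cos x := fun x h1 h2 =>
    mul_nonneg (mul_nonneg (Nat.cast_nonneg m)
        (pow_nonneg (Real.sin_nonneg_of_nonneg_of_le_pi (ha.trans h1)
          (by linarith [pi_pos] : x ≤ π)) _))
      (Real.cos_nonneg_of_mem_Icc ⟨by linarith [pi_pos, ha.trans h1], h2.trans hb⟩)
  -- deriv congruence on the open interval
  have hderiv : ∀ (f F : ℝ → ℝ), EqOn f F (Icc 0 π) → ∀ x : ℝ, a < x → x ≤ b →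
      deriv f x = deriv F x := by
    intro f F hEq x h1 h2
    have hx : x ∈ Ioo (0:ℝ) π := ⟨lt_of_le_of_lt ha h1, lt_of_le_of_lt (h2.trans hb) hπ⟩
    have he : f =ᶠ[𝓝 x] F :=
      eventuallyEq_of_mem (isOpen_Ioo.mem_nhds hx) (fun y hy => hEq (Ioo_subset_Icc_self hy))
    exact he.deriv_eq
  -- convert the goal to the extensions
  have conv1 : (∫ θ in a..b, |deriv ustar θ| * Real.sin θ ^ m)
      = ∫ θ in a..b, |deriv g θ| * Real.sin θ ^ m := by
    apply intervalIntegral.integral_congr_ae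
    refine ae_of_all _ fun x hx => ?_
    rw [Set.uIoc_of_le hab] at hx
    rw [hderiv ustar g hgEq x hx.1 hx.2]
  have conv2 : (∫ θ in a..b, |deriv u₀ θ| * Real.sin θ ^ m)
      = ∫ θ in a..b, |deriv v θ| * Real.sin θ ^ m := by
    apply intervalIntegral.integral_congr_ae
    refine ae_of_all _ fun x hx => ?_
    rw [Set.uIoc_of_le hab] at hx
    rw [hderiv u₀ v hvEq x hx.1 hx.2]
  rw [conv1, conv2]
  -- integrability facts
  have hiG : ∀ c e : ℝ, IntervalIntegrable (fun x => |deriv g x| * Real.sin x ^ m) volume c e := by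
    intro c e
    apply intInt (C := (K₁ : ℝ))
    · exact (((measurable_deriv g).abs.mul
        ((Real.continuous_sin.pow m).measurable))).aestronglyMeasurable
    · intro x
      rw [abs_mul, abs_abs]
      calc |deriv g x| * |Real.sin x ^ m|
          ≤ (K₁ : ℝ) * 1 := mul_le_mul (abs_deriv_le hg x)
            (by rw [abs_pow]; exact pow_le_one₀ (abs_nonneg _) (Real.abs_sin_le_one x))
            (abs_nonneg _) K₁.coe_nonneg
        _ = (K₁ : ℝ) := by ring
  have hiV : ∀ c e : ℝ, IntervalIntegrable (fun x => |deriv v x| * Real.sin x ^ m) volume c e := by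
    intro c e
    apply intInt (C := (K₀ : ℝ))
    · exact (((measurable_deriv v).abs.mul
        ((Real.continuous_sin.pow m).measurable))).aestronglyMeasurable
    · intro x
      rw [abs_mul, abs_abs]
      calc |deriv v x| * |Real.sin x ^ m|
          ≤ (K₀ : ℝ) * 1 := mul_le_mul (abs_deriv_le hv x)
            (by rw [abs_pow]; exact pow_le_one₀ (abs_nonneg _) (Real.abs_sin_le_one x))
            (abs_nonneg _) K₀.coe_nonneg
        _ = (K₀ : ℝ) := by ring
  have hiDV : ∀ c e : ℝ, IntervalIntegrable (fun x => deriv v x * Real.sin x ^ m) volume c e := by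
    intro c e
    apply intInt (C := (K₀ : ℝ))
    · exact ((measurable_deriv v).mul
        ((Real.continuous_sin.pow m).measurable)).aestronglyMeasurable
    · intro x
      rw [abs_mul]
      calc |deriv v x| * |Real.sin x ^ m|
          ≤ (K₀ : ℝ) * 1 := mul_le_mul (abs_deriv_le hv x)
            (by rw [abs_pow]; exact pow_le_one₀ (abs_nonneg _) (Real.abs_sin_le_one x))
            (abs_nonneg _) K₀.coe_nonneg
        _ = (K₀ : ℝ) := by ring
  -- antitone/monotone transfer to g
  have hanti : AntitoneOn g (Icc a τ) := by
    intro p hp q hq hpq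
    rw [← hgEq (hsub hp.1 (hp.2.trans hτb)), ← hgEq (hsub hq.1 (hq.2.trans hτb))]
    exact hmono₁ hp hq hpq
  have hmono : MonotoneOn g (Icc τ b) := by
    intro p hp q hq hpq
    rw [← hgEq (hsub (haτ.trans hp.1) hp.2), ← hgEq (hsub (haτ.trans hq.1) hq.2)]
    exact hmono₂ hp hq hpq
  -- g-side exact computations
  have SG1 : ∫ x in a..τ, |deriv g x| * Real.sin x ^ m
      = g a * Real.sin a ^ m - g τ * Real.sin τ ^ m
        + ∫ x in a..τ, g x * ((m : ℝ) * Real.sin x ^ (m - 1) * Real.cos x) := by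
    have e1 : ∫ x in a..τ, |deriv g x| * Real.sin x ^ m
        = ∫ x in a..τ, -(deriv g x * Real.sin x ^ m) := by
      apply intervalIntegral.integral_congr_ae
      filter_upwards [hg.ae_differentiableAt_real] with x hdx hmem
      rw [Set.uIoc_of_le haτ] at hmem
      rw [abs_of_nonpos (deriv_nonpos_of_antitoneOn hanti hmem.1 hmem.2 hdx), neg_mul]
    rw [e1, intervalIntegral.integral_neg, parts m hg hgB a τ]
    ring
  have SG2 : ∫ x in τ..b, |deriv g x| * Real.sin x ^ m
      = g b * Real.sin b ^ m - g τ * Real.sin τ ^ m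
        - ∫ x in τ..b, g x * ((m : ℝ) * Real.sin x ^ (m - 1) * Real.cos x) := by
    have e1 : ∫ x in τ..b, |deriv g x| * Real.sin x ^ m
        = ∫ x in τ..b, deriv g x * Real.sin x ^ m := by
      apply intervalIntegral.integral_congr_ae
      filter_upwards [hg.ae_differentiableAt_real] with x hdx hmem
      rw [Set.uIoc_of_le hτb] at hmem
      rw [abs_of_nonneg (deriv_nonneg_of_monotoneOn hmono hmem.1 hmem.2 hdx)]
    rw [e1, parts m hg hgB τ b]
  -- v-side inequalities
  have SV1 : v a * Real.sin a ^ m - v τ * Real.sin τ ^ m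
        + (∫ x in a..τ, v x * ((m : ℝ) * Real.sin x ^ (m - 1) * Real.cos x))
      ≤ ∫ x in a..τ, |deriv v x| * Real.sin x ^ m := by
    have e1 : v a * Real.sin a ^ m - v τ * Real.sin τ ^ m
        + (∫ x in a..τ, v x * ((m : ℝ) * Real.sin x ^ (m - 1) * Real.cos x))
        = ∫ x in a..τ, -(deriv v x * Real.sin x ^ m) := by
      rw [intervalIntegral.integral_neg, parts m hv hvB a τ]
      ring
    rw [e1]
    apply intervalIntegral.integral_mono_on haτ ((hiDV a τ).neg) (hiV a τ)
    intro x hx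
    have hw := hsin x hx.1 (hx.2.trans hτb)
    calc -(deriv v x * Real.sin x ^ m) = -(deriv v x) * Real.sin x ^ m := by ring
      _ ≤ |deriv v x| * Real.sin x ^ m := mul_le_mul_of_nonneg_right (neg_le_abs _) hw
  have SV2 : v b * Real.sin b ^ m - v τ * Real.sin τ ^ m
        - (∫ x in τ..b, v x * ((m : ℝ) * Real.sin x ^ (m - 1) * Real.cos x))
      ≤ ∫ x in τ..b, |deriv v x| * Real.sin x ^ m := by
    have e1 := parts m hv hvB τ b
    have e2 : ∫ x in τ..b, deriv v x * Real.sin x ^ m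
        ≤ ∫ x in τ..b, |deriv v x| * Real.sin x ^ m := by
      apply intervalIntegral.integral_mono_on hτb (hiDV τ b) (hiV τ b)
      intro x hx
      exact mul_le_mul_of_nonneg_right (le_abs_self _) (hsin x (haτ.trans hx.1) hx.2)
    linarith
  -- comparisons of the boundary-correction integrals
  have T1 : (∫ x in a..τ, g x * ((m : ℝ) * Real.sin x ^ (m - 1) * Real.cos x))
        - (∫ x in a..τ, v x * ((m : ℝ) * Real.sin x ^ (m - 1) * Real.cos x))
      ≤ ∫ x in a..τ, (Mu₀ x - u₀ x) * ((m : ℝ) * Real.sin x ^ (m - 1) * Real.cos x) := by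
    have e1 : ∫ x in a..τ, (g x - v x) * ((m : ℝ) * Real.sin x ^ (m - 1) * Real.cos x)
        = (∫ x in a..τ, g x * ((m : ℝ) * Real.sin x ^ (m - 1) * Real.cos x))
          - ∫ x in a..τ, v x * ((m : ℝ) * Real.sin x ^ (m - 1) * Real.cos x) := by
      rw [← intervalIntegral.integral_sub (f := fun x => g x * ((m : ℝ) * Real.sin x ^ (m - 1) * Real.cos x))
        (g := fun x => v x * ((m : ℝ) * Real.sin x ^ (m - 1) * Real.cos x))
        ((hg.continuous.mul hWc).intervalIntegrable a τ)
        ((hv.continuous.mul hWc).intervalIntegrable a τ)]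
      apply intervalIntegral.integral_congr
      intro x _
      ring
    rw [← e1]
    apply intervalIntegral.integral_mono_on haτ
      (((hg.continuous.sub hv.continuous).mul hWc).intervalIntegrable a τ)
    · apply ContinuousOn.intervalIntegrable
      rw [Set.uIcc_of_le haτ]
      have hss : Icc a τ ⊆ Icc 0 π := fun y hy => hsub hy.1 (hy.2.trans hτb)
      exact (((hKM.continuousOn.mono hss).sub (hK₀.continuousOn.mono hss)).mul hWc.continuousOn)
    · intro x hx
      have hmem : x ∈ Icc (0:ℝ) π := hsub hx.1 (hx.2.trans hτb)
      have h1 : g x - v x ≤ Mu₀ x - u₀ x := by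
        rw [← hgEq hmem, ← hvEq hmem]
        linarith [hle₂ x hmem]
      exact mul_le_mul_of_nonneg_right h1 (hWnn x hx.1 (hx.2.trans hτb))
  have T2 : (∫ x in τ..b, v x * ((m : ℝ) * Real.sin x ^ (m - 1) * Real.cos x))
      ≤ ∫ x in τ..b, g x * ((m : ℝ) * Real.sin x ^ (m - 1) * Real.cos x) := by
    apply intervalIntegral.integral_mono_on hτb
      ((hv.continuous.mul hWc).intervalIntegrable τ b)
      ((hg.continuous.mul hWc).intervalIntegrable τ b)
    intro x hx
    have hmem : x ∈ Icc (0:ℝ) π := hsub (haτ.trans hx.1) hx.2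
    have h1 : v x ≤ g x := by
      rw [← hgEq hmem, ← hvEq hmem]
      exact hle₁ x hmem
    exact mul_le_mul_of_nonneg_right h1 (hWnn x (haτ.trans hx.1) hx.2)
  have T3 : v τ * Real.sin τ ^ m ≤ g τ * Real.sin τ ^ m := by
    have hmem : τ ∈ Icc (0:ℝ) π := hsub haτ hτb
    have h1 : v τ ≤ g τ := by
      rw [← hgEq hmem, ← hvEq hmem]
      exact hle₁ τ hmem
    exact mul_le_mul_of_nonneg_right h1 (hsin τ haτ hτb)
  -- boundary values agree
  have hga : g a = v a := by
    rw [← hgEq (hsub le_rfl hab), ← hvEq (hsub le_rfl hab)]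
    exact hba
  have hgb2 : g b = v b := by
    rw [← hgEq (hsub hab le_rfl), ← hvEq (hsub hab le_rfl)]
    exact hbb
  -- split the integrals and conclude
  have splitG : (∫ x in a..b, |deriv g x| * Real.sin x ^ m)
      = (∫ x in a..τ, |deriv g x| * Real.sin x ^ m)
        + ∫ x in τ..b, |deriv g x| * Real.sin x ^ m :=
    (intervalIntegral.integral_add_adjacent_intervals (hiG a τ) (hiG τ b)).symm
  have splitV : (∫ x in a..b, |deriv v x| * Real.sin x ^ m)
      = (∫ x in a..τ, |deriv v x| * Real.sin x ^ m)
        + ∫ x in τ..b, |deriv v x| * Real.sin x ^ m :=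
    (intervalIntegral.integral_add_adjacent_intervals (hiV a τ) (hiV τ b)).symm
  rw [splitG, splitV, SG1, SG2, hga, hgb2]
  linarith
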